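/- Let D be a digraph obtained from the complete digraph on n vertices by removing a matching of size p (a set of p pairwise disjoint arcs). Then D is (n−p)-dichoosable. -/

import Mathlib

open Relation

lemma merge_lemma {V : Type*} [DecidableEq V] :
    ∀ (m : ℕ) (S : Finset V) (M : Finset (V × V)) (L : V → Finset ℕ),
    M.card = m →
    (∀ e ∈ M, e.1 ≠ e.2) →
    (∀ e ∈ M, ∀ f ∈ M, e ≠ f →
      e.1 ≠ f.1 ∧ e.1 ≠ f.2 ∧ e.2 ≠ f.1 ∧ e.2 ≠ f.2) →
    (∀ e ∈ M, e.1 ∈ S ∧ e.2 ∈ S) →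
    (∀ v ∈ S, S.card - M.card ≤ (L v).card) →
    ∃ α : V → ℕ, (∀ v ∈ S, α v ∈ L v) ∧
      ∀ u ∈ S, ∀ v ∈ S, α u = α v → u = v ∨ (u, v) ∈ M ∨ (v, u) ∈ M := by
  intro m
  induction m using Nat.strong_induction_on with
  | _ m IH =>
  intro S M L hm hM1 hM2 hMS hL
  classical
  have h2p : 2 * M.card ≤ S.card := by
    have hdisj : ∀ e ∈ M, ∀ f ∈ M, e ≠ f →
        Disjoint ({e.1, e.2} : Finset V) {f.1, f.2} := by
      intro e he f hf hef
      obtain ⟨h1, h2, h3, h4⟩ := hM2 e he f hf hef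
      simp only [Finset.disjoint_left, Finset.mem_insert, Finset.mem_singleton]
      rintro a (rfl | rfl) h
      · rcases h with h | h
        · exact h1 h
        · exact h2 h
      · rcases h with h | h
        · exact h3 h
        · exact h4 h
    have hcard : (M.biUnion fun e => ({e.1, e.2} : Finset V)).card = 2 * M.card := by
      rw [Finset.card_biUnion hdisj]
      rw [Finset.sum_congr rfl (fun e he => by
        rw [Finset.card_insert_of_notMem (by simp [hM1 e he]), Finset.card_singleton])]
      simp [Finset.sum_const, mul_comm]
    have hsub : (M.biUnion fun e => ({e.1, e.2} : Finset V)) ⊆ S := by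
      intro x hx
      simp only [Finset.mem_biUnion, Finset.mem_insert, Finset.mem_singleton] at hx
      obtain ⟨e, he, (rfl | rfl)⟩ := hx
      · exact (hMS e he).1
      · exact (hMS e he).2
    calc 2 * M.card = _ := hcard.symm
      _ ≤ S.card := Finset.card_le_card hsub
  by_cases hex : ∃ e ∈ M, ((L e.1) ∩ (L e.2)).Nonempty
  · -- merge a pair
    obtain ⟨e, heM, c, hc⟩ := hex
    rw [Finset.mem_inter] at hc
    obtain ⟨hc1, hc2⟩ := hc
    have he12 := hM1 e heM
    have he1S := (hMS e heM).1
    have he2S := (hMS e heM).2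
    have hm1 : 1 ≤ m := by
      rw [← hm]
      exact Finset.card_pos.mpr ⟨e, heM⟩
    set S' := (S.erase e.1).erase e.2 with hS'
    set M' := M.erase e with hM'
    have hM'card : M'.card = m - 1 := by rw [hM', Finset.card_erase_of_mem heM, hm]
    have he2S' : e.2 ∈ S.erase e.1 := Finset.mem_erase.mpr ⟨Ne.symm he12, he2S⟩
    have hS'card : S'.card = S.card - 2 := by
      rw [hS', Finset.card_erase_of_mem he2S', Finset.card_erase_of_mem he1S]
      omega
    have hmemS' : ∀ v, v ∈ S' ↔ (v ≠ e.1 ∧ v ≠ e.2 ∧ v ∈ S) := by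
      intro v
      simp only [hS', Finset.mem_erase]
      tauto
    obtain ⟨α', hα'1, hα'2⟩ := IH (m - 1) (by omega) S' M' (fun v => (L v).erase c)
      hM'card
      (fun f hf => hM1 f (Finset.mem_of_mem_erase hf))
      (fun f hf g hg => hM2 f (Finset.mem_of_mem_erase hf) g (Finset.mem_of_mem_erase hg))
      (by
        intro f hf
        rw [hM', Finset.mem_erase] at hf
        obtain ⟨hfe, hfM⟩ := hf
        obtain ⟨h1, h2, h3, h4⟩ := hM2 f hfM e heM hfe
        exact ⟨(hmemS' _).mpr ⟨h1, h2, (hMS f hfM).1⟩, (hmemS' _).mpr ⟨h3, h4, (hMS f hfM).2⟩⟩)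
      (by
        intro v hv
        have hv' := ((hmemS' v).mp hv).2.2
        have h1 := hL v hv'
        have h2 : (L v).card - 1 ≤ ((L v).erase c).card := Finset.pred_card_le_card_erase
        show S'.card - M'.card ≤ ((L v).erase c).card
        rw [hS'card, hM'card, hm] at *
        omega)
    clear IH
    refine ⟨fun v => if v = e.1 ∨ v = e.2 then c else α' v, ?_, ?_⟩
    · intro v hv
      show (if v = e.1 ∨ v = e.2 then c else α' v) ∈ L v
      by_cases hv12 : v = e.1 ∨ v = e.2
      · rw [if_pos hv12]
        rcases hv12 with rfl | rfl
        · exact hc1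
        · exact hc2
      · rw [not_or] at hv12
        have hv' : v ∈ S' := (hmemS' v).mpr ⟨hv12.1, hv12.2, hv⟩
        rw [if_neg (not_or.mpr hv12)]
        exact Finset.mem_of_mem_erase (hα'1 v hv')
    · intro u hu v hv h
      replace h : (if u = e.1 ∨ u = e.2 then c else α' u) =
          (if v = e.1 ∨ v = e.2 then c else α' v) := h
      by_cases hu12 : u = e.1 ∨ u = e.2 <;> by_cases hv12 : v = e.1 ∨ v = e.2
      · rcases hu12 with rfl | rfl <;> rcases hv12 with rfl | rfl
        · exact Or.inl rfl
        · exact Or.inr (Or.inl (by rw [Prod.mk.eta]; exact heM))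
        · exact Or.inr (Or.inr (by rw [Prod.mk.eta]; exact heM))
        · exact Or.inl rfl
      · exfalso
        rw [not_or] at hv12
        have hv' : v ∈ S' := (hmemS' v).mpr ⟨hv12.1, hv12.2, hv⟩
        have hne := Finset.ne_of_mem_erase (hα'1 v hv')
        rw [if_pos hu12, if_neg (not_or.mpr hv12)] at h
        exact hne h.symm
      · exfalso
        rw [not_or] at hu12
        have hu' : u ∈ S' := (hmemS' u).mpr ⟨hu12.1, hu12.2, hu⟩
        have hne := Finset.ne_of_mem_erase (hα'1 u hu')
        rw [if_pos hv12, if_neg (not_or.mpr hu12)] at h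
        exact hne h
      · rw [not_or] at hu12
        rw [not_or] at hv12
        have hu' : u ∈ S' := (hmemS' u).mpr ⟨hu12.1, hu12.2, hu⟩
        have hv' : v ∈ S' := (hmemS' v).mpr ⟨hv12.1, hv12.2, hv⟩
        rw [if_neg (not_or.mpr hu12), if_neg (not_or.mpr hv12)] at h
        rcases hα'2 u hu' v hv' h with h' | h' | h'
        · exact Or.inl h'
        · exact Or.inr (Or.inl (Finset.mem_of_mem_erase h'))
        · exact Or.inr (Or.inr (Finset.mem_of_mem_erase h'))
  · -- all matched pairs have disjoint lists — Hall's theorem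
    push_neg at hex
    have hdisjL : ∀ e ∈ M, Disjoint (L e.1) (L e.2) := by
      intro e he
      rw [Finset.disjoint_iff_inter_eq_empty]
      exact hex e he
    have hall : ∀ s : Finset {x // x ∈ S}, s.card ≤ (s.biUnion fun x => L x.1).card := by
      intro s
      rcases s.eq_empty_or_nonempty with rfl | hs
      · simp
      by_cases hsmall : s.card ≤ S.card - M.card
      · obtain ⟨x, hx⟩ := hs
        calc s.card ≤ S.card - M.card := hsmall
          _ ≤ (L x.1).card := hL x.1 x.2
          _ ≤ _ := Finset.card_le_card (Finset.subset_biUnion_of_mem (fun x => L x.1) hx)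
      · set s' := s.image (fun x => x.1) with hs'
        have hs'card : s'.card = s.card :=
          Finset.card_image_of_injective _ Subtype.val_injective
        have hs'S : s' ⊆ S := by
          intro x hx
          rw [hs', Finset.mem_image] at hx
          obtain ⟨y, _, rfl⟩ := hx
          exact y.2
        have hpair : ∃ e ∈ M, e.1 ∈ s' ∧ e.2 ∈ s' := by
          by_contra hno
          push_neg at hno
          have hcard : M.card ≤ (S \ s').card := by
            apply Finset.card_le_card_of_injOn (fun e => if e.1 ∈ s' then e.2 else e.1)
            · intro e he
              simp only [Finset.mem_coe, Finset.mem_sdiff]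
              by_cases h1 : e.1 ∈ s'
              · rw [if_pos h1]
                exact ⟨(hMS e he).2, hno e he h1⟩
              · rw [if_neg h1]
                exact ⟨(hMS e he).1, h1⟩
            · intro e he f hf hef
              by_contra hne
              obtain ⟨a, b, c', d⟩ := hM2 e (Finset.mem_coe.mp he) f (Finset.mem_coe.mp hf) hne
              replace hef : (if e.1 ∈ s' then e.2 else e.1) =
                  (if f.1 ∈ s' then f.2 else f.1) := hef
              by_cases h1 : e.1 ∈ s' <;> by_cases h2 : f.1 ∈ s'
              · rw [if_pos h1, if_pos h2] at hef; exact d hef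
              · rw [if_pos h1, if_neg h2] at hef; exact c' hef
              · rw [if_neg h1, if_pos h2] at hef; exact b hef
              · rw [if_neg h1, if_neg h2] at hef; exact a hef
          rw [Finset.card_sdiff_of_subset hs'S, hs'card] at hcard
          have hsS : s.card ≤ S.card := hs'card ▸ Finset.card_le_card hs'S
          omega
        obtain ⟨e, heM, he1, he2⟩ := hpair
        have hsub : L e.1 ∪ L e.2 ⊆ s.biUnion fun x => L x.1 := by
          apply Finset.union_subset
          · obtain ⟨x1, hx1s, hx1⟩ := Finset.mem_image.mp he1
            intro a ha
            exact Finset.mem_biUnion.mpr ⟨x1, hx1s, by rw [hx1]; exact ha⟩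
          · obtain ⟨x2, hx2s, hx2⟩ := Finset.mem_image.mp he2
            intro a ha
            exact Finset.mem_biUnion.mpr ⟨x2, hx2s, by rw [hx2]; exact ha⟩
        have hU : (L e.1 ∪ L e.2).card = (L e.1).card + (L e.2).card :=
          Finset.card_union_of_disjoint (hdisjL e heM)
        have hbU : (L e.1 ∪ L e.2).card ≤ (s.biUnion fun x => L x.1).card :=
          Finset.card_le_card hsub
        have h1 := hL e.1 (hMS e heM).1
        have h2 := hL e.2 (hMS e heM).2
        have hsS : s.card ≤ S.card := hs'card ▸ Finset.card_le_card hs'S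
        omega
    obtain ⟨f, hfinj, hf⟩ :=
      (Finset.all_card_le_biUnion_card_iff_exists_injective (fun x : {x // x ∈ S} => L x.1)).mp
        hall
    refine ⟨fun v => if h : v ∈ S then f ⟨v, h⟩ else 0, ?_, ?_⟩
    · intro v hv
      show (if h : v ∈ S then f ⟨v, h⟩ else 0) ∈ L v
      rw [dif_pos hv]
      exact hf ⟨v, hv⟩
    · intro u hu v hv h
      replace h : (if h : u ∈ S then f ⟨u, h⟩ else 0) =
          (if h : v ∈ S then f ⟨v, h⟩ else 0) := h
      rw [dif_pos hu, dif_pos hv] at h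
      exact Or.inl (congrArg Subtype.val (hfinj h))

theorem stmt_7 {V : Type*} [Fintype V] [DecidableEq V] (n p : ℕ)
    (hn : Fintype.card V = n)
    (M : Finset (V × V)) (hp : M.card = p)
    (hM1 : ∀ e ∈ M, e.1 ≠ e.2)
    (hM2 : ∀ e ∈ M, ∀ f ∈ M, e ≠ f →
      e.1 ≠ f.1 ∧ e.1 ≠ f.2 ∧ e.2 ≠ f.1 ∧ e.2 ≠ f.2)
    (A : V → V → Prop) (hA : ∀ u v, A u v ↔ u ≠ v ∧ (u, v) ∉ M)
    (L : V → Finset ℕ) (hL : ∀ v, n - p ≤ (L v).card) :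
    ∃ α : V → ℕ, (∀ v, α v ∈ L v) ∧
      ∀ v, ¬ TransGen (fun x y => A x y ∧ α x = α y) v v := by
  obtain ⟨α, hα1, hα2⟩ := merge_lemma M.card Finset.univ M L rfl hM1 hM2
    (fun e _ => ⟨Finset.mem_univ _, Finset.mem_univ _⟩)
    (by
      intro v _
      rw [Finset.card_univ, hn, hp]
      exact hL v)
  refine ⟨α, fun v => hα1 v (Finset.mem_univ v), ?_⟩
  intro v hv
  have key : ∀ x y, (A x y ∧ α x = α y) → (y, x) ∈ M ∧ x ≠ y := by
    intro x y ⟨hxy, hαxy⟩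
    rw [hA] at hxy
    obtain ⟨hne, hnm⟩ := hxy
    rcases hα2 x (Finset.mem_univ x) y (Finset.mem_univ y) hαxy with rfl | h | h
    · exact absurd rfl hne
    · exact absurd h hnm
    · exact ⟨h, hne⟩
  have step : ∀ x y z, (A x y ∧ α x = α y) → (A y z ∧ α y = α z) → False := by
    intro x y z hxy hyz
    obtain ⟨hyx, hnxy⟩ := key x y hxy
    obtain ⟨hzy, hnyz⟩ := key y z hyz
    by_cases heq : ((y, x) : V × V) = (z, y)
    · exact hnyz (congrArg Prod.fst heq)
    · exact (hM2 _ hyx _ hzy heq).2.1 rfl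
  have mono : ∀ a b, TransGen (fun x y => A x y ∧ α x = α y) a b → (A a b ∧ α a = α b) := by
    intro a b h
    induction h with
    | single h => exact h
    | tail _ h2 ih => exact (step _ _ _ ih h2).elim
  have := key v v (mono v v hv)
  exact this.2 rfl
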